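/- For a polynomial f in variables X = (X_1,...,X_n) and Y = (Y_1,...,Y_r) with deg_X f = d and deg_Y f = m, let f̄ be its homogenization with respect to the Y-variables (using a new variable Z). Then for all x̄_1, x̄_2 in the simplex Δ̃_n = {x ∈ ℝ^n : Σ x_i ≤ 1, x_i ≥ 0} and all (ȳ, z) ∈ C^r = {(y,z) ∈ ℝ^{r+1} : |y|^2 + z^2 = 1}, one has |f̄(x̄_1, ȳ, z) − f̄(x̄_2, ȳ, z)| ≤ (1/2)·√n·‖f‖_•·C(m+r, r)·d·(d+1)·‖x̄_1 − x̄_2‖, where ‖·‖ denotes the Euclidean norm on ℝ^n. -/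

import Mathlib

open MvPolynomial
section Helpers
open Finset Nat

/-- `αᵢ · mult(α) = (Σα) · mult(α − eᵢ)` for `αᵢ ≥ 1`. -/
lemma mult_step {n : ℕ} (a : Fin n → ℕ) (i : Fin n) (h : 1 ≤ a i) :
    a i * Nat.multinomial univ a =
      (∑ j, a j) * Nat.multinomial univ (fun j => a j - if j = i then 1 else 0) := by
  set a' : Fin n → ℕ := fun j => a j - if j = i then 1 else 0 with ha'
  have hP : 0 < ∏ j, (a' j)! := Finset.prod_pos fun j _ => Nat.factorial_pos _
  refine Nat.eq_of_mul_eq_mul_left hP ?_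
  have hsum' : ∑ j, a' j = (∑ j, a j) - 1 := by
    have : ∑ j, a j = a i + ∑ j ∈ univ.erase i, a j :=
      (Finset.add_sum_erase _ _ (mem_univ i)).symm
    have h2 : ∑ j, a' j = (a i - 1) + ∑ j ∈ univ.erase i, a' j :=
      (Finset.add_sum_erase _ _ (mem_univ i)).symm.trans (by simp [ha'])
    rw [h2, this]
    have : ∑ j ∈ univ.erase i, a' j = ∑ j ∈ univ.erase i, a j :=
      Finset.sum_congr rfl fun j hj => by
        simp [ha', (Finset.mem_erase.mp hj).1]
    omega
  have hsum_pos : 1 ≤ ∑ j, a j := le_trans h (Finset.single_le_sum (fun _ _ => Nat.zero_le _) (mem_univ i))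
  have key1 : (∏ j, (a' j)!) * (a i * Nat.multinomial univ a) = a i * ((∏ j, (a' j)!) * Nat.multinomial univ a) := by ring
  rw [key1]
  have hprod : a i * ∏ j, (a' j)! = ∏ j, (a j)! := by
    rw [← Finset.prod_erase_mul _ _ (mem_univ i), ← Finset.prod_erase_mul _ _ (mem_univ i)]
    have : ∏ j ∈ univ.erase i, (a' j)! = ∏ j ∈ univ.erase i, (a j)! :=
      Finset.prod_congr rfl fun j hj => by simp [ha', (Finset.mem_erase.mp hj).1]
    rw [this]
    have : a i * ((a' i)!) = (a i)! := by
      have : a' i = a i - 1 := by simp [ha']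
      rw [this]
      exact Nat.mul_factorial_pred (by omega)
    rw [mul_left_comm, this]
  calc a i * ((∏ j, (a' j)!) * Nat.multinomial univ a)
      = (a i * ∏ j, (a' j)!) * Nat.multinomial univ a := by ring
    _ = (∏ j, (a j)!) * Nat.multinomial univ a := by rw [hprod]
    _ = (∑ j, a j)! := Nat.multinomial_spec _ _
    _ = (∑ j, a j) * ((∑ j, a j) - 1)! := (Nat.mul_factorial_pred (by omega)).symm
    _ = (∑ j, a j) * ((∑ j, a' j)!) := by rw [hsum']
    _ = (∑ j, a j) * ((∏ j, (a' j)!) * Nat.multinomial univ a') := by rw [Nat.multinomial_spec]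
    _ = (∏ j, (a' j)!) * ((∑ j, a j) * Nat.multinomial univ a') := by ring

lemma gauss_sum (d : ℕ) : ∑ k ∈ Finset.range d, ((k : ℝ) + 1) = d * (d + 1) / 2 := by
  induction d with
  | zero => simp
  | succ d ih => rw [Finset.sum_range_succ, ih]; push_cast; ring

lemma sum_mult_pow_le {n : ℕ} (ξ : Fin n → ℝ) (hξ0 : ∀ i, 0 ≤ ξ i) (hξ1 : ∑ i, ξ i ≤ 1)
    (k : ℕ) (T : Finset (Fin n → ℕ)) (hT : ∀ γ ∈ T, ∑ j, γ j = k) :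
    ∑ γ ∈ T, (Nat.multinomial univ γ : ℝ) * ∏ j, ξ j ^ γ j ≤ 1 := by
  have hsub : T ⊆ Finset.piAntidiag univ k := by
    intro γ hγ
    rw [Finset.mem_piAntidiag]
    exact ⟨hT γ hγ, fun i _ => mem_univ i⟩
  calc ∑ γ ∈ T, (Nat.multinomial univ γ : ℝ) * ∏ j, ξ j ^ γ j
      ≤ ∑ γ ∈ Finset.piAntidiag univ k, (Nat.multinomial univ γ : ℝ) * ∏ j, ξ j ^ γ j := by
        refine Finset.sum_le_sum_of_subset_of_nonneg hsub fun γ _ _ => ?_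
        have : (0:ℝ) ≤ ∏ j, ξ j ^ γ j := Finset.prod_nonneg fun j _ => pow_nonneg (hξ0 j) _
        positivity
    _ = (∑ i, ξ i) ^ k := (Finset.sum_pow_eq_sum_piAntidiag univ ξ k).symm
    _ ≤ 1 := pow_le_one₀ (Finset.sum_nonneg fun i _ => hξ0 i) hξ1

lemma tier_bound {n : ℕ} (ξ : Fin n → ℝ) (hξ0 : ∀ i, 0 ≤ ξ i) (hξ1 : ∑ i, ξ i ≤ 1)
    (d : ℕ) (T : Finset (Fin n → ℕ)) (hT : ∀ γ ∈ T, ∑ j, γ j + 1 ≤ d) :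
    ∑ γ ∈ T, ((∑ j, γ j : ℕ) + 1 : ℝ) * (Nat.multinomial univ γ : ℝ) * ∏ j, ξ j ^ γ j
      ≤ d * (d + 1) / 2 := by
  have hmaps : ∀ γ ∈ T, (∑ j, γ j) ∈ Finset.range d := fun γ hγ =>
    Finset.mem_range.mpr (by have := hT γ hγ; omega)
  rw [← Finset.sum_fiberwise_of_maps_to hmaps]
  calc ∑ k ∈ Finset.range d, ∑ γ ∈ T.filter (fun γ => ∑ j, γ j = k),
        ((∑ j, γ j : ℕ) + 1 : ℝ) * (Nat.multinomial univ γ : ℝ) * ∏ j, ξ j ^ γ j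
      ≤ ∑ k ∈ Finset.range d, ((k : ℝ) + 1) := by
        refine Finset.sum_le_sum fun k _ => ?_
        have : ∑ γ ∈ T.filter (fun γ => ∑ j, γ j = k),
            ((∑ j, γ j : ℕ) + 1 : ℝ) * (Nat.multinomial univ γ : ℝ) * ∏ j, ξ j ^ γ j
            = ((k : ℝ) + 1) * ∑ γ ∈ T.filter (fun γ => ∑ j, γ j = k),
              (Nat.multinomial univ γ : ℝ) * ∏ j, ξ j ^ γ j := by
          rw [Finset.mul_sum]
          refine Finset.sum_congr rfl fun γ hγ => ?_
          have hk : ∑ j, γ j = k := (Finset.mem_filter.mp hγ).2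
          rw [hk]; ring
        rw [this]
        have h1 : ∑ γ ∈ T.filter (fun γ => ∑ j, γ j = k),
            (Nat.multinomial univ γ : ℝ) * ∏ j, ξ j ^ γ j ≤ 1 :=
          sum_mult_pow_le ξ hξ0 hξ1 k _ (fun γ hγ => (Finset.mem_filter.mp hγ).2)
        have h0 : (0:ℝ) ≤ (k : ℝ) + 1 := by positivity
        calc ((k:ℝ)+1) * ∑ γ ∈ T.filter (fun γ => ∑ j, γ j = k),
              (Nat.multinomial univ γ : ℝ) * ∏ j, ξ j ^ γ j
            ≤ ((k:ℝ)+1) * 1 := mul_le_mul_of_nonneg_left h1 h0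
          _ = (k:ℝ)+1 := mul_one _
    _ = d * (d + 1) / 2 := gauss_sum d

lemma class_bound {n : ℕ} (ξ : Fin n → ℝ) (hξ0 : ∀ i, 0 ≤ ξ i) (hξ1 : ∑ i, ξ i ≤ 1)
    (d : ℕ) (S : Finset (Fin n → ℕ)) (hS : ∀ a ∈ S, ∑ j, a j ≤ d) (i : Fin n) :
    ∑ a ∈ S, (Nat.multinomial univ a : ℝ) * (a i) * ∏ j, ξ j ^ (a j - if j = i then 1 else 0)
      ≤ d * (d + 1) / 2 := by
  classical
  set Φ : (Fin n → ℕ) → (Fin n → ℕ) := fun a j => a j - if j = i then 1 else 0 with hΦ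
  set S' := S.filter (fun a => a i ≠ 0) with hS'
  have hfilter : ∑ a ∈ S', (Nat.multinomial univ a : ℝ) * (a i) * ∏ j, ξ j ^ (Φ a j)
      = ∑ a ∈ S, (Nat.multinomial univ a : ℝ) * (a i) * ∏ j, ξ j ^ (Φ a j) := by
    refine Finset.sum_filter_of_ne fun a _ h => ?_
    intro hai
    apply h
    rw [hai]
    simp
  rw [← hfilter]
  have hterm : ∀ a ∈ S', (Nat.multinomial univ a : ℝ) * (a i) * ∏ j, ξ j ^ (Φ a j)
      = ((∑ j, Φ a j : ℕ) + 1 : ℝ) * (Nat.multinomial univ (Φ a) : ℝ) * ∏ j, ξ j ^ (Φ a j) := by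
    intro a ha
    have hai : 1 ≤ a i := Nat.one_le_iff_ne_zero.mpr (Finset.mem_filter.mp ha).2
    have hkey := mult_step a i hai
    have hsum : ∑ j, a j = (∑ j, Φ a j) + 1 := by
      have h1 : ∑ j, a j = a i + ∑ j ∈ univ.erase i, a j :=
        (Finset.add_sum_erase _ _ (mem_univ i)).symm
      have h2 : ∑ j, Φ a j = (a i - 1) + ∑ j ∈ univ.erase i, Φ a j :=
        (Finset.add_sum_erase _ _ (mem_univ i)).symm.trans (by simp [hΦ])
      have h3 : ∑ j ∈ univ.erase i, Φ a j = ∑ j ∈ univ.erase i, a j :=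
        Finset.sum_congr rfl fun j hj => by simp [hΦ, (Finset.mem_erase.mp hj).1]
      omega
    have hkey2 : (a i) * Nat.multinomial univ a
        = ((∑ j, Φ a j) + 1) * Nat.multinomial univ (Φ a) := by
      have hr : Nat.multinomial univ (Φ a)
          = Nat.multinomial univ (fun j => a j - if j = i then 1 else 0) := rfl
      rw [hr, ← hsum]; exact hkey
    have : ((a i : ℝ)) * (Nat.multinomial univ a : ℝ)
        = ((∑ j, Φ a j : ℕ) + 1 : ℝ) * (Nat.multinomial univ (Φ a) : ℝ) := by
      exact_mod_cast congrArg (fun t : ℕ => (t : ℝ)) hkey2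
    calc (Nat.multinomial univ a : ℝ) * (a i) * ∏ j, ξ j ^ (Φ a j)
        = ((a i : ℝ) * (Nat.multinomial univ a : ℝ)) * ∏ j, ξ j ^ (Φ a j) := by ring
      _ = ((∑ j, Φ a j : ℕ) + 1 : ℝ) * (Nat.multinomial univ (Φ a) : ℝ) * ∏ j, ξ j ^ (Φ a j) := by
          rw [this]
  rw [Finset.sum_congr rfl hterm]
  have hinj : ∀ a₁ ∈ S', ∀ a₂ ∈ S', Φ a₁ = Φ a₂ → a₁ = a₂ := by
    intro a₁ h₁ a₂ h₂ h
    have k₁ : a₁ i ≠ 0 := (Finset.mem_filter.mp h₁).2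
    have k₂ : a₂ i ≠ 0 := (Finset.mem_filter.mp h₂).2
    funext j
    have := congrFun h j
    by_cases hj : j = i
    · subst hj; simp [hΦ] at this; omega
    · simpa [hΦ, hj] using this
  have himg : ∑ γ ∈ S'.image Φ, ((∑ j, γ j : ℕ) + 1 : ℝ)
        * (Nat.multinomial univ γ : ℝ) * ∏ j, ξ j ^ γ j
      = ∑ a ∈ S', ((∑ j, Φ a j : ℕ) + 1 : ℝ)
        * (Nat.multinomial univ (Φ a) : ℝ) * ∏ j, ξ j ^ Φ a j := Finset.sum_image hinj
  rw [← himg]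
  refine tier_bound ξ hξ0 hξ1 d _ fun γ hγ => ?_
  obtain ⟨a, ha, rfl⟩ := Finset.mem_image.mp hγ
  have hai : 1 ≤ a i := Nat.one_le_iff_ne_zero.mpr (Finset.mem_filter.mp ha).2
  have hsum : ∑ j, a j = (∑ j, Φ a j) + 1 := by
    have h1 : ∑ j, a j = a i + ∑ j ∈ univ.erase i, a j :=
      (Finset.add_sum_erase _ _ (mem_univ i)).symm
    have h2 : ∑ j, Φ a j = (a i - 1) + ∑ j ∈ univ.erase i, Φ a j :=
      (Finset.add_sum_erase _ _ (mem_univ i)).symm.trans (by simp [hΦ])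
    have h3 : ∑ j ∈ univ.erase i, Φ a j = ∑ j ∈ univ.erase i, a j :=
      Finset.sum_congr rfl fun j hj => by simp [hΦ, (Finset.mem_erase.mp hj).1]
    omega
  have := hS a (Finset.mem_filter.mp ha).1
  omega

lemma card_bound {r m : ℕ} (T : Finset (Fin r → ℕ)) (hT : ∀ b ∈ T, ∑ j, b j ≤ m) :
    T.card ≤ Nat.choose (m + r) r := by
  classical
  set Ψ : (Fin r → ℕ) → (Fin (r+1) → ℕ) := fun b => Fin.cons (m - ∑ j, b j) b with hΨ
  have hinj : Function.Injective Ψ := by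
    intro b₁ b₂ h
    have := congrArg Fin.tail h
    simpa [hΨ, Fin.tail_cons] using this
  have h1 : T.card = (T.image Ψ).card := (Finset.card_image_of_injective T hinj).symm
  have h2 : T.image Ψ ⊆ Finset.piAntidiag (univ : Finset (Fin (r+1))) m := by
    intro c hc
    obtain ⟨b, hb, rfl⟩ := Finset.mem_image.mp hc
    rw [Finset.mem_piAntidiag]
    constructor
    · rw [hΨ]
      rw [Fin.sum_cons]
      have := hT b hb
      omega
    · exact fun i _ => mem_univ i
  have h3 : (Finset.piAntidiag (univ : Finset (Fin (r+1))) m).card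
      = Nat.choose (m + r) r := by
    rw [← Finset.map_sym_eq_piAntidiag, Finset.card_map, Finset.sym_univ]
    have : (univ : Finset (Sym (Fin (r+1)) m)).card = Fintype.card (Sym (Fin (r+1)) m) := rfl
    rw [this, Sym.card_sym_eq_choose]
    simp only [Fintype.card_fin]
    have h4 : r + 1 + m - 1 = m + r := by omega
    rw [h4]
    have h5 := Nat.choose_symm (Nat.le_add_left r m)
    simpa using h5
  calc T.card = (T.image Ψ).card := h1
    _ ≤ _ := Finset.card_le_card h2
    _ = _ := h3

open MvPolynomial in
lemma grouped_bound {n r : ℕ} (f : MvPolynomial (Fin n ⊕ Fin r) ℝ) (d m : ℕ) (B : ℝ)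
    (hB0 : 0 ≤ B)
    (hd : (f.support.sup fun s => ∑ i, s (Sum.inl i)) = d)
    (hm : (f.support.sup fun s => ∑ j, s (Sum.inr j)) = m)
    (hB : ∀ s ∈ f.support,
      |f.coeff s| ≤ (Nat.multinomial Finset.univ fun i => s (Sum.inl i) : ℕ) * B)
    (ξ : Fin n → ℝ) (hξ0 : ∀ i, 0 ≤ ξ i) (hξ1 : ∑ i, ξ i ≤ 1) (i : Fin n) :
    ∑ s ∈ f.support, |f.coeff s| * (s (Sum.inl i)) *
        ∏ j, ξ j ^ (s (Sum.inl j) - if j = i then 1 else 0)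
      ≤ B * (Nat.choose (m + r) r) * (d * (d + 1) / 2) := by
  classical
  set αm : ((Fin n ⊕ Fin r) →₀ ℕ) → (Fin n → ℕ) := fun s i => s (Sum.inl i) with hαm
  set βm : ((Fin n ⊕ Fin r) →₀ ℕ) → (Fin r → ℕ) := fun s j => s (Sum.inr j) with hβm
  have hnonneg : ∀ s : (Fin n ⊕ Fin r) →₀ ℕ,
      (0:ℝ) ≤ (s (Sum.inl i)) * ∏ j, ξ j ^ (s (Sum.inl j) - if j = i then 1 else 0) := by
    intro s
    exact mul_nonneg (Nat.cast_nonneg _)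
      (Finset.prod_nonneg fun j _ => pow_nonneg (hξ0 j) _)
  have step1 : ∑ s ∈ f.support, |f.coeff s| * (s (Sum.inl i)) *
        ∏ j, ξ j ^ (s (Sum.inl j) - if j = i then 1 else 0)
      ≤ B * ∑ s ∈ f.support, (Nat.multinomial univ (αm s) : ℝ) * (s (Sum.inl i)) *
        ∏ j, ξ j ^ (s (Sum.inl j) - if j = i then 1 else 0) := by
    rw [Finset.mul_sum]
    refine Finset.sum_le_sum fun s hs => ?_
    have h1 := mul_le_mul_of_nonneg_right (hB s hs) (hnonneg s)
    calc |f.coeff s| * (s (Sum.inl i)) * ∏ j, ξ j ^ (s (Sum.inl j) - if j = i then 1 else 0)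
        = |f.coeff s| * ((s (Sum.inl i)) * ∏ j, ξ j ^ (s (Sum.inl j) - if j = i then 1 else 0)) := by
          ring
      _ ≤ ((Nat.multinomial univ (αm s) : ℕ) * B) *
            ((s (Sum.inl i)) * ∏ j, ξ j ^ (s (Sum.inl j) - if j = i then 1 else 0)) := h1
      _ = B * ((Nat.multinomial univ (αm s) : ℝ) * (s (Sum.inl i)) *
            ∏ j, ξ j ^ (s (Sum.inl j) - if j = i then 1 else 0)) := by push_cast; ring
  refine step1.trans ?_
  have step2 : ∑ s ∈ f.support, (Nat.multinomial univ (αm s) : ℝ) * (s (Sum.inl i)) *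
        ∏ j, ξ j ^ (s (Sum.inl j) - if j = i then 1 else 0)
      ≤ (Nat.choose (m + r) r) * (d * (d + 1) / 2) := by
    set T := f.support.image βm with hT
    have hmaps : ∀ s ∈ f.support, βm s ∈ T := fun s hs => Finset.mem_image_of_mem βm hs
    rw [← Finset.sum_fiberwise_of_maps_to hmaps]
    have inner : ∀ b ∈ T, ∑ s ∈ f.support.filter (fun s => βm s = b),
        (Nat.multinomial univ (αm s) : ℝ) * (s (Sum.inl i)) *
          ∏ j, ξ j ^ (s (Sum.inl j) - if j = i then 1 else 0)
        ≤ d * (d + 1) / 2 := by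
      intro b _
      set F := f.support.filter (fun s => βm s = b) with hF
      have hinj : ∀ s₁ ∈ F, ∀ s₂ ∈ F, αm s₁ = αm s₂ → s₁ = s₂ := by
        intro s₁ h₁ s₂ h₂ hα
        have hb₁ : βm s₁ = b := (Finset.mem_filter.mp h₁).2
        have hb₂ : βm s₂ = b := (Finset.mem_filter.mp h₂).2
        ext a
        cases a with
        | inl i' => exact congrFun hα i'
        | inr j' => rw [show s₁ (Sum.inr j') = βm s₁ j' from rfl, hb₁, ← hb₂]
      have himg : ∑ a ∈ F.image αm, (Nat.multinomial univ a : ℝ) * (a i) *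
            ∏ j, ξ j ^ (a j - if j = i then 1 else 0)
          = ∑ s ∈ F, (Nat.multinomial univ (αm s) : ℝ) * (αm s i) *
            ∏ j, ξ j ^ (αm s j - if j = i then 1 else 0) := Finset.sum_image hinj
      have : ∑ s ∈ F, (Nat.multinomial univ (αm s) : ℝ) * (s (Sum.inl i)) *
            ∏ j, ξ j ^ (s (Sum.inl j) - if j = i then 1 else 0)
          = ∑ a ∈ F.image αm, (Nat.multinomial univ a : ℝ) * (a i) *
            ∏ j, ξ j ^ (a j - if j = i then 1 else 0) := himg.symm
      rw [this]
      refine class_bound ξ hξ0 hξ1 d _ (fun a ha => ?_) i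
      obtain ⟨s, hs, rfl⟩ := Finset.mem_image.mp ha
      have := Finset.le_sup (f := fun s => ∑ i, s (Sum.inl i)) (Finset.mem_filter.mp hs).1
      rw [hd] at this
      exact this
    calc ∑ b ∈ T, ∑ s ∈ f.support.filter (fun s => βm s = b),
          (Nat.multinomial univ (αm s) : ℝ) * (s (Sum.inl i)) *
            ∏ j, ξ j ^ (s (Sum.inl j) - if j = i then 1 else 0)
        ≤ ∑ b ∈ T, (d * (d + 1) / 2 : ℝ) := Finset.sum_le_sum inner
      _ = T.card * (d * (d + 1) / 2 : ℝ) := by rw [Finset.sum_const, nsmul_eq_mul]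
      _ ≤ (Nat.choose (m + r) r) * (d * (d + 1) / 2 : ℝ) := by
          have hcard : T.card ≤ Nat.choose (m + r) r := by
            refine card_bound T fun b hb => ?_
            obtain ⟨s, hs, rfl⟩ := Finset.mem_image.mp hb
            have := Finset.le_sup (f := fun s => ∑ j, s (Sum.inr j)) hs
            rw [hm] at this
            exact this
          have hd2 : (0:ℝ) ≤ d * (d + 1) / 2 := by positivity
          exact mul_le_mul_of_nonneg_right (by exact_mod_cast hcard) hd2
  calc B * ∑ s ∈ f.support, (Nat.multinomial univ (αm s) : ℝ) * (s (Sum.inl i)) *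
        ∏ j, ξ j ^ (s (Sum.inl j) - if j = i then 1 else 0)
      ≤ B * ((Nat.choose (m + r) r) * (d * (d + 1) / 2)) :=
        mul_le_mul_of_nonneg_left step2 hB0
    _ = B * (Nat.choose (m + r) r) * (d * (d + 1) / 2) := by ring

lemma abcd_le (a b c d : ℝ) (ha : 0 ≤ a) (hb : 0 ≤ b) (hc0 : 0 ≤ c) (hd0 : 0 ≤ d)
    (hc : c ≤ 1) (hd : d ≤ 1) : a * b * c * d ≤ a * b := by
  nlinarith [mul_nonneg ha hb, mul_nonneg (mul_nonneg ha hb) hc0]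

lemma deriv_term_eq {n : ℕ} (ξ : Fin n → ℝ) (k : Fin n → ℕ) (i : Fin n) :
    (∏ j ∈ univ.erase i, ξ j ^ k j) * ((k i : ℝ) * ξ i ^ (k i - 1))
      = (k i : ℝ) * ∏ j, ξ j ^ (k j - if j = i then 1 else 0) := by
  by_cases h : k i = 0
  · simp [h]
  · have key : ∏ j, ξ j ^ (k j - if j = i then 1 else 0)
        = (∏ j ∈ univ.erase i, ξ j ^ k j) * ξ i ^ (k i - 1) := by
      rw [← Finset.prod_erase_mul _ _ (mem_univ i), if_pos rfl]
      congr 1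
      exact Finset.prod_congr rfl fun j hj => by simp [(Finset.mem_erase.mp hj).1]
    rw [key]; ring

end Helpers
open Finset Nat

noncomputable def degX {n r : ℕ} (f : MvPolynomial (Fin n ⊕ Fin r) ℝ) : ℕ :=
  f.support.sup fun s => ∑ i, s (Sum.inl i)

noncomputable def degY {n r : ℕ} (f : MvPolynomial (Fin n ⊕ Fin r) ℝ) : ℕ :=
  f.support.sup fun s => ∑ j, s (Sum.inr j)

/-- Evaluation at `(x, y, z)` of the homogenization of `f` in the `Y`-variables. -/
noncomputable def homYval {n r : ℕ} (f : MvPolynomial (Fin n ⊕ Fin r) ℝ) (m : ℕ)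
    (x : Fin n → ℝ) (y : Fin r → ℝ) (z : ℝ) : ℝ :=
  ∑ s ∈ f.support, f.coeff s * (∏ i, x i ^ s (Sum.inl i)) * (∏ j, y j ^ s (Sum.inr j))
    * z ^ (m - ∑ j, s (Sum.inr j))

/-- Lipschitz-type estimate for `f̄` in the `x`-variable on the simplex:
`|f̄(x₁,y,z) − f̄(x₂,y,z)| ≤ (1/2)·√n·‖f‖_•·C(m+r,r)·d·(d+1)·‖x₁ − x₂‖`. -/
theorem stmt1 {n r : ℕ} (f : MvPolynomial (Fin n ⊕ Fin r) ℝ) (d m : ℕ) (B : ℝ)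
    (hd : degX f = d) (hm : degY f = m)
    (hB : ∀ s ∈ f.support,
      |f.coeff s| ≤ (Nat.multinomial Finset.univ fun i => s (Sum.inl i) : ℕ) * B)
    (x₁ x₂ : Fin n → ℝ)
    (hx₁ : (∀ i, 0 ≤ x₁ i) ∧ ∑ i, x₁ i ≤ 1) (hx₂ : (∀ i, 0 ≤ x₂ i) ∧ ∑ i, x₂ i ≤ 1)
    (y : Fin r → ℝ) (z : ℝ) (hyz : (∑ j, y j ^ 2) + z ^ 2 = 1) :
    |homYval f m x₁ y z - homYval f m x₂ y z| ≤
      (1 / 2) * Real.sqrt n * B * (Nat.choose (m + r) r) * d * (d + 1) *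
        Real.sqrt (∑ i, (x₁ i - x₂ i) ^ 2) := by
  classical
  simp only [degX] at hd
  simp only [degY] at hm
  by_cases hsupp : f.support = ∅
  · have hd0 : d = 0 := by rw [← hd, hsupp]; simp
    simp [homYval, hsupp, hd0]
  obtain ⟨s₀, hs₀⟩ := Finset.nonempty_iff_ne_empty.mpr hsupp
  have hB0 : 0 ≤ B := by
    have h1 := hB s₀ hs₀
    have h2 : (0:ℝ) < ((Nat.multinomial Finset.univ fun i => s₀ (Sum.inl i) : ℕ) : ℝ) := by
      exact_mod_cast Nat.multinomial_pos _ _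
    nlinarith [abs_nonneg (f.coeff s₀)]
  set Δ : Fin n → ℝ := fun i => x₁ i - x₂ i with hΔ
  set ξ : ℝ → Fin n → ℝ := fun t i => x₂ i + t * Δ i with hξ
  set Py : ((Fin n ⊕ Fin r) →₀ ℕ) → ℝ := fun s => ∏ j, y j ^ s (Sum.inr j) with hPy
  set Pz : ((Fin n ⊕ Fin r) →₀ ℕ) → ℝ := fun s => z ^ (m - ∑ j, s (Sum.inr j)) with hPz
  set g : ℝ → ℝ := fun t => ∑ s ∈ f.support,
    f.coeff s * (∏ i, ξ t i ^ s (Sum.inl i)) * Py s * Pz s with hg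
  set g' : ℝ → ℝ := fun t => ∑ s ∈ f.support, f.coeff s *
      (∑ i, (∏ j ∈ univ.erase i, ξ t j ^ s (Sum.inl j)) *
        ((s (Sum.inl i) : ℝ) * ξ t i ^ (s (Sum.inl i) - 1) * Δ i)) * Py s * Pz s with hg'
  have hderiv : ∀ t : ℝ, HasDerivAt g (g' t) t := by
    intro t
    apply HasDerivAt.fun_sum
    intro s _
    have hP : HasDerivAt (fun u : ℝ => ∏ i, ξ u i ^ s (Sum.inl i))
        (∑ i, (∏ j ∈ univ.erase i, ξ t j ^ s (Sum.inl j)) *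
          ((s (Sum.inl i) : ℝ) * ξ t i ^ (s (Sum.inl i) - 1) * Δ i)) t := by
      have h := HasDerivAt.fun_finsetProd (u := (univ : Finset (Fin n)))
        (f := fun i u => ξ u i ^ s (Sum.inl i))
        (f' := fun i => (s (Sum.inl i) : ℝ) * ξ t i ^ (s (Sum.inl i) - 1) * Δ i)
        (x := t) ?_
      · simpa [smul_eq_mul] using h
      · intro i _
        have hlin : HasDerivAt (fun u : ℝ => x₂ i + u * Δ i) (Δ i) t := by
          simpa using ((hasDerivAt_id t).mul_const (Δ i)).const_add (x₂ i)
        exact hlin.pow _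
    exact ((hP.const_mul (f.coeff s)).mul_const (Py s)).mul_const (Pz s)
  set D : ℝ := B * (Nat.choose (m + r) r) * (d * (d + 1) / 2) with hD
  set C₀ : ℝ := (∑ i, |Δ i|) * D with hC₀
  have hy1 : ∀ j, |y j| ≤ 1 := by
    intro j
    rw [← sq_le_one_iff_abs_le_one]
    have h2 : y j ^ 2 + ∑ j' ∈ univ.erase j, y j' ^ 2 = ∑ j', y j' ^ 2 :=
      Finset.add_sum_erase univ (fun j' => y j' ^ 2) (mem_univ j)
    have h1 : (0:ℝ) ≤ ∑ j' ∈ univ.erase j, y j' ^ 2 :=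
      Finset.sum_nonneg fun _ _ => sq_nonneg _
    nlinarith [sq_nonneg z]
  have hz1 : |z| ≤ 1 := by
    rw [← sq_le_one_iff_abs_le_one]
    nlinarith [Finset.sum_nonneg fun j (_ : j ∈ univ) => sq_nonneg (y j)]
  have hPy1 : ∀ s : (Fin n ⊕ Fin r) →₀ ℕ, |Py s| ≤ 1 := by
    intro s
    rw [hPy, Finset.abs_prod]
    refine Finset.prod_le_one (fun j _ => abs_nonneg _) fun j _ => ?_
    rw [abs_pow]
    exact pow_le_one₀ (abs_nonneg _) (hy1 j)
  have hPz1 : ∀ s : (Fin n ⊕ Fin r) →₀ ℕ, |Pz s| ≤ 1 := by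
    intro s
    rw [hPz, abs_pow]
    exact pow_le_one₀ (abs_nonneg _) hz1
  have bound : ∀ t ∈ Set.Icc (0:ℝ) 1, ‖g' t‖ ≤ C₀ := by
    intro t ht
    obtain ⟨ht0, ht1⟩ := Set.mem_Icc.mp ht
    have hξ0 : ∀ i, 0 ≤ ξ t i := by
      intro i
      have h1 := hx₁.1 i
      have h2 := hx₂.1 i
      simp only [hξ, hΔ]
      nlinarith
    have hξ1 : ∑ i, ξ t i ≤ 1 := by
      have hsum : ∑ i, ξ t i = (∑ i, x₂ i) + t * ((∑ i, x₁ i) - ∑ i, x₂ i) := by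
        simp only [hξ, hΔ]
        rw [Finset.sum_add_distrib, ← Finset.mul_sum, Finset.sum_sub_distrib]
      rw [hsum]
      nlinarith [hx₁.2, hx₂.2]
    have hA : ∀ s : (Fin n ⊕ Fin r) →₀ ℕ,
        |∑ i, (∏ j ∈ univ.erase i, ξ t j ^ s (Sum.inl j)) *
          ((s (Sum.inl i) : ℝ) * ξ t i ^ (s (Sum.inl i) - 1) * Δ i)|
        ≤ ∑ i, (s (Sum.inl i) : ℝ) *
            (∏ j, ξ t j ^ (s (Sum.inl j) - if j = i then 1 else 0)) * |Δ i| := by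
      intro s
      refine (Finset.abs_sum_le_sum_abs _ _).trans (le_of_eq ?_)
      refine Finset.sum_congr rfl fun i _ => ?_
      have e1 : (∏ j ∈ univ.erase i, ξ t j ^ s (Sum.inl j)) *
          ((s (Sum.inl i) : ℝ) * ξ t i ^ (s (Sum.inl i) - 1) * Δ i)
          = ((∏ j ∈ univ.erase i, ξ t j ^ s (Sum.inl j)) *
            ((s (Sum.inl i) : ℝ) * ξ t i ^ (s (Sum.inl i) - 1))) * Δ i := by ring
      rw [e1, abs_mul, deriv_term_eq (ξ t) (fun j => s (Sum.inl j)) i]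
      have hnn : (0:ℝ) ≤ (s (Sum.inl i) : ℝ) *
          ∏ j, ξ t j ^ (s (Sum.inl j) - if j = i then 1 else 0) :=
        mul_nonneg (Nat.cast_nonneg _) (Finset.prod_nonneg fun j _ => pow_nonneg (hξ0 j) _)
      rw [abs_of_nonneg hnn, mul_assoc]
    calc ‖g' t‖ = |∑ s ∈ f.support, f.coeff s *
          (∑ i, (∏ j ∈ univ.erase i, ξ t j ^ s (Sum.inl j)) *
            ((s (Sum.inl i) : ℝ) * ξ t i ^ (s (Sum.inl i) - 1) * Δ i)) * Py s * Pz s| := by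
          rw [Real.norm_eq_abs, hg']
      _ ≤ ∑ s ∈ f.support, |f.coeff s *
          (∑ i, (∏ j ∈ univ.erase i, ξ t j ^ s (Sum.inl j)) *
            ((s (Sum.inl i) : ℝ) * ξ t i ^ (s (Sum.inl i) - 1) * Δ i)) * Py s * Pz s| :=
          Finset.abs_sum_le_sum_abs _ _
      _ ≤ ∑ s ∈ f.support, |f.coeff s| *
          (∑ i, (s (Sum.inl i) : ℝ) *
            (∏ j, ξ t j ^ (s (Sum.inl j) - if j = i then 1 else 0)) * |Δ i|) := by
          refine Finset.sum_le_sum fun s _ => ?_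
          rw [abs_mul, abs_mul, abs_mul]
          have hAn : (0:ℝ) ≤ ∑ i, (s (Sum.inl i) : ℝ) *
              (∏ j, ξ t j ^ (s (Sum.inl j) - if j = i then 1 else 0)) * |Δ i| :=
            Finset.sum_nonneg fun i _ => mul_nonneg (mul_nonneg (Nat.cast_nonneg _)
              (Finset.prod_nonneg fun j _ => pow_nonneg (hξ0 j) _)) (abs_nonneg _)
          have h1 : |f.coeff s| * |∑ i, (∏ j ∈ univ.erase i, ξ t j ^ s (Sum.inl j)) *
              ((s (Sum.inl i) : ℝ) * ξ t i ^ (s (Sum.inl i) - 1) * Δ i)| * |Py s| * |Pz s|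
              ≤ |f.coeff s| * |∑ i, (∏ j ∈ univ.erase i, ξ t j ^ s (Sum.inl j)) *
              ((s (Sum.inl i) : ℝ) * ξ t i ^ (s (Sum.inl i) - 1) * Δ i)| :=
            abcd_le _ _ _ _ (abs_nonneg _) (abs_nonneg _) (abs_nonneg _) (abs_nonneg _)
              (hPy1 s) (hPz1 s)
          exact h1.trans (mul_le_mul_of_nonneg_left (hA s) (abs_nonneg _))
      _ = ∑ i, |Δ i| * ∑ s ∈ f.support, |f.coeff s| * (s (Sum.inl i)) *
            ∏ j, ξ t j ^ (s (Sum.inl j) - if j = i then 1 else 0) := by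
          simp_rw [Finset.mul_sum]
          rw [Finset.sum_comm]
          exact Finset.sum_congr rfl fun i _ => Finset.sum_congr rfl fun s _ => by ring
      _ ≤ ∑ i, |Δ i| * D := by
          refine Finset.sum_le_sum fun i _ => ?_
          refine mul_le_mul_of_nonneg_left ?_ (abs_nonneg _)
          rw [hD]
          exact grouped_bound f d m B hB0 hd hm hB (ξ t) hξ0 hξ1 i
      _ = C₀ := by rw [hC₀, Finset.sum_mul]
  have key := (convex_Icc (0:ℝ) 1).norm_image_sub_le_of_norm_hasDerivWithin_le
    (f := g) (f' := g') (fun u _ => (hderiv u).hasDerivWithinAt) bound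
    (Set.mem_Icc.mpr ⟨le_refl 0, zero_le_one⟩) (Set.mem_Icc.mpr ⟨zero_le_one, le_refl 1⟩)
  have hg1 : g 1 = homYval f m x₁ y z := by
    rw [hg]
    simp only [homYval]
    refine Finset.sum_congr rfl fun s _ => ?_
    have hx : ∀ i, ξ 1 i = x₁ i := fun i => by rw [hξ, hΔ]; ring
    rw [hPy, hPz]
    have hprod : ∏ i, ξ 1 i ^ s (Sum.inl i) = ∏ i, x₁ i ^ s (Sum.inl i) :=
      Finset.prod_congr rfl fun i _ => by rw [hx i]
    rw [hprod]
  have hg0 : g 0 = homYval f m x₂ y z := by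
    rw [hg]
    simp only [homYval]
    refine Finset.sum_congr rfl fun s _ => ?_
    have hx : ∀ i, ξ 0 i = x₂ i := fun i => by rw [hξ, hΔ]; ring
    rw [hPy, hPz]
    have hprod : ∏ i, ξ 0 i ^ s (Sum.inl i) = ∏ i, x₂ i ^ s (Sum.inl i) :=
      Finset.prod_congr rfl fun i _ => by rw [hx i]
    rw [hprod]
  have hkey2 : |homYval f m x₁ y z - homYval f m x₂ y z| ≤ C₀ := by
    rw [← hg1, ← hg0]
    have : ‖g 1 - g 0‖ ≤ C₀ * ‖(1:ℝ) - 0‖ := key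
    simpa using this
  refine hkey2.trans ?_
  have hD0 : 0 ≤ D := by rw [hD]; positivity
  have hcs : ∑ i, |Δ i| ≤ Real.sqrt n * Real.sqrt (∑ i, Δ i ^ 2) := by
    have h1 : (∑ i, |Δ i|) ^ 2 ≤ (n : ℝ) * ∑ i, Δ i ^ 2 := by
      have := sq_sum_le_card_mul_sum_sq (s := (univ : Finset (Fin n))) (f := fun i => |Δ i|)
      simpa [sq_abs] using this
    have h2 : ∑ i, |Δ i| = Real.sqrt ((∑ i, |Δ i|) ^ 2) :=
      (Real.sqrt_sq (Finset.sum_nonneg fun i _ => abs_nonneg _)).symm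
    rw [h2]
    calc Real.sqrt ((∑ i, |Δ i|) ^ 2) ≤ Real.sqrt ((n : ℝ) * ∑ i, Δ i ^ 2) :=
          Real.sqrt_le_sqrt h1
      _ = Real.sqrt n * Real.sqrt (∑ i, Δ i ^ 2) := Real.sqrt_mul (Nat.cast_nonneg n) _
  calc C₀ = (∑ i, |Δ i|) * D := hC₀
    _ ≤ (Real.sqrt n * Real.sqrt (∑ i, Δ i ^ 2)) * D :=
        mul_le_mul_of_nonneg_right hcs hD0
    _ = (1 / 2) * Real.sqrt n * B * (Nat.choose (m + r) r) * d * (d + 1) *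
        Real.sqrt (∑ i, Δ i ^ 2) := by rw [hD]; ring
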